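/- For the symmetric discrete Lagrangian L(x₀,x₁,z₀,z₁) = ½((x₁-x₀)/h)² - (V(x₀)+V(x₁))/2 - α(z₀+z₁)/2 with h α ≠ -2, the discrete generalized Euler-Lagrange equation is equivalent to (x_{j+1} - 2x_j + x_{j-1})/h² = -V'(x_j) - (α/(1 + hα/2))·((x_j - x_{j-1})/h - (h/2)V'(x_j)). -/

import Mathlib

/-- The symmetric discrete Lagrangian of Example 3.6 (second order contact
integrator): `L(x₀,x₁,z₀,z₁) = ½((x₁-x₀)/h)² - (V(x₀)+V(x₁))/2 - α(z₀+z₁)/2`. -/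
noncomputable def L10 (V : ℝ → ℝ) (α h : ℝ) (q : ℝ × ℝ × ℝ × ℝ) : ℝ :=
  (1 / 2) * ((q.2.1 - q.1) / h) ^ 2 - (V q.1 + V q.2.1) / 2
    - α * (q.2.2.1 + q.2.2.2) / 2

lemma L10_fderiv (V : ℝ → ℝ) (hV : Differentiable ℝ V) (α h : ℝ)
    (p v : ℝ × ℝ × ℝ × ℝ) :
    fderiv ℝ (L10 V α h) p v =
      ((p.2.1 - p.1) / h) * ((v.2.1 - v.1) / h)
        - (deriv V p.1 * v.1 + deriv V p.2.1 * v.2.1) / 2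
        - α * (v.2.2.1 + v.2.2.2) / 2 := by
  have hfst : HasFDerivAt (fun q : ℝ × ℝ × ℝ × ℝ => q.1) (ContinuousLinearMap.fst ℝ ℝ (ℝ × ℝ × ℝ)) p := hasFDerivAt_fst
  have hsnd : HasFDerivAt (fun q : ℝ × ℝ × ℝ × ℝ => q.2) (ContinuousLinearMap.snd ℝ ℝ (ℝ × ℝ × ℝ)) p := hasFDerivAt_snd
  have hx1 : HasFDerivAt (fun q : ℝ × ℝ × ℝ × ℝ => q.2.1) ((ContinuousLinearMap.fst ℝ ℝ (ℝ × ℝ)).comp (ContinuousLinearMap.snd ℝ ℝ (ℝ × ℝ × ℝ))) p :=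
    (hasFDerivAt_fst (𝕜 := ℝ)).comp p hsnd
  have hz0 : HasFDerivAt (fun q : ℝ × ℝ × ℝ × ℝ => q.2.2.1)
      ((ContinuousLinearMap.fst ℝ ℝ ℝ).comp ((ContinuousLinearMap.snd ℝ ℝ (ℝ × ℝ)).comp (ContinuousLinearMap.snd ℝ ℝ (ℝ × ℝ × ℝ)))) p :=
    (hasFDerivAt_fst (𝕜 := ℝ)).comp p ((hasFDerivAt_snd (𝕜 := ℝ)).comp p hsnd)
  have hz1 : HasFDerivAt (fun q : ℝ × ℝ × ℝ × ℝ => q.2.2.2)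
      ((ContinuousLinearMap.snd ℝ ℝ ℝ).comp ((ContinuousLinearMap.snd ℝ ℝ (ℝ × ℝ)).comp (ContinuousLinearMap.snd ℝ ℝ (ℝ × ℝ × ℝ)))) p :=
    (hasFDerivAt_snd (𝕜 := ℝ)).comp p ((hasFDerivAt_snd (𝕜 := ℝ)).comp p hsnd)
  have hd : HasFDerivAt (fun q : ℝ × ℝ × ℝ × ℝ => q.2.1 - q.1) _ p := hx1.sub hfst
  have hV0 : HasFDerivAt (fun q : ℝ × ℝ × ℝ × ℝ => V q.1) _ p := (hV p.1).hasDerivAt.comp_hasFDerivAt p hfst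
  have hV1 : HasFDerivAt (fun q : ℝ × ℝ × ℝ × ℝ => V q.2.1) _ p := (hV p.2.1).hasDerivAt.comp_hasFDerivAt p hx1
  have hL : L10 V α h = fun q : ℝ × ℝ × ℝ × ℝ => (1/(2*h^2)) * ((q.2.1 - q.1) * (q.2.1 - q.1)) - ((1/2:ℝ)) * (V q.1 + V q.2.1) - (α/2) * (q.2.2.1 + q.2.2.2) := by
    funext q; unfold L10; field_simp
  have hF : HasFDerivAt (fun q : ℝ × ℝ × ℝ × ℝ => (1/(2*h^2)) * ((q.2.1 - q.1) * (q.2.1 - q.1)) - ((1/2:ℝ)) * (V q.1 + V q.2.1) - (α/2) * (q.2.2.1 + q.2.2.2)) _ p :=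
    ((((hd.mul hd).const_mul (1/(2*h^2):ℝ)).sub ((hV0.add hV1).const_mul (1/2:ℝ))).sub ((hz0.add hz1).const_mul (α/2)))
  rw [hL, hF.fderiv]
  simp [ContinuousLinearMap.comp_apply]
  ring

/-- for the symmetric discrete Lagrangian `L10` with `hα ≠ -2`,
the discrete generalized Euler-Lagrange equation is equivalent to
`(x_{j+1} - 2x_j + x_{j-1})/h² = -V'(x_j) - (α/(1 + hα/2))((x_j - x_{j-1})/h - (h/2)V'(x_j))`. -/
theorem stmt10 (V : ℝ → ℝ) (hV : Differentiable ℝ V) (α h : ℝ) (hh : 0 < h)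
    (hα : h * α ≠ -2) (xm x xp zm z zp : ℝ) :
    (fderiv ℝ (L10 V α h) (x, xp, z, zp) (1, 0, 0, 0)
        + fderiv ℝ (L10 V α h) (xm, x, zm, z) (0, 1, 0, 0)
          * (1 + h * fderiv ℝ (L10 V α h) (x, xp, z, zp) (0, 0, 1, 0))
          / (1 - h * fderiv ℝ (L10 V α h) (xm, x, zm, z) (0, 0, 0, 1)) = 0) ↔
      (xp - 2 * x + xm) / h ^ 2
        = -deriv V x - α / (1 + h * α / 2) * ((x - xm) / h - h / 2 * deriv V x) := by
  have hne : h ≠ 0 := ne_of_gt hh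
  have hden : 1 + h * α / 2 ≠ 0 := fun H => hα (by linarith)
  rw [L10_fderiv V hV, L10_fderiv V hV, L10_fderiv V hV, L10_fderiv V hV]
  simp only []
  norm_num
  have hden' : 1 - h * -(α / 2) ≠ 0 := by
    intro H; apply hα; linarith
  have hden2 : 1 + h * (α / 2) ≠ 0 := fun H => hα (by linarith)
  have h2α : 2 + h * α ≠ 0 := fun H => hα (by linarith)
  have hA : h * 4 + h ^ 2 * α * 2 ≠ 0 := by
    have e : h * 4 + h ^ 2 * α * 2 = 2 * h * (2 + h * α) := by ring
    rw [e]; exact mul_ne_zero (mul_ne_zero two_ne_zero hne) h2α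
  have hB : h ^ 2 * 8 + h ^ 3 * α * 4 ≠ 0 := by
    have e : h ^ 2 * 8 + h ^ 3 * α * 4 = 4 * h ^ 2 * (2 + h * α) := by ring
    rw [e]; exact mul_ne_zero (by positivity) h2α
  have hA' : α * h ^ 2 * 2 + h * 4 ≠ 0 := by rw [show α * h ^ 2 * 2 + h * 4 = h * 4 + h ^ 2 * α * 2 by ring]; exact hA
  have hB' : α * h ^ 3 * 4 + h ^ 2 * 8 ≠ 0 := by rw [show α * h ^ 3 * 4 + h ^ 2 * 8 = h ^ 2 * 8 + h ^ 3 * α * 4 by ring]; exact hB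
  rw [div_eq_iff (by positivity : (h:ℝ)^2 ≠ 0)]
  field_simp [hden2, hA, hB, hA', hB']
  constructor <;> intro H
  · linear_combination (-1/2 : ℝ) * H
  · linear_combination (-2 : ℝ) * H
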